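/- Let S, T be the (r+1)×r complex matrices with S_{ij} = δ_{ij} and T_{ij} = δ_{i,j+1}. Then the stabilizer of the pair (S,T) under the action (P,Q)·(A₁,A₂) = (P A₁ Q, P A₂ Q) of GL(r+1,ℂ)×GL(r,ℂ) is exactly the central subgroup Δ = {(z·Id_{r+1}, z⁻¹·Id_r) : z ∈ ℂ*}. -/

import Mathlib

/-- The stabiliser of the Kronecker pair `(S, T)` (with `Sᵢⱼ = δᵢⱼ`, `Tᵢⱼ = δ_{i,j+1}`,
of size `(r+1) × r`) under the action `(P,Q)·(A₁,A₂) = (P A₁ Q, P A₂ Q)` of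
`GL(r+1,ℂ) × GL(r,ℂ)` is exactly the central subgroup `Δ = {(z·Id, z⁻¹·Id) : z ∈ ℂ*}`. -/
theorem stabiliser_of_kronecker_pair (r : ℕ)
    (S T : Matrix (Fin (r + 1)) (Fin r) ℂ)
    (hS : S = Matrix.of (fun (i : Fin (r + 1)) (j : Fin r) =>
      if (i : ℕ) = (j : ℕ) then 1 else 0))
    (hT : T = Matrix.of (fun (i : Fin (r + 1)) (j : Fin r) =>
      if (i : ℕ) = (j : ℕ) + 1 then 1 else 0))
    (P : Matrix (Fin (r + 1)) (Fin (r + 1)) ℂ) (Q : Matrix (Fin r) (Fin r) ℂ)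
    (hP : IsUnit P) (hQ : IsUnit Q) :
    (P * S * Q = S ∧ P * T * Q = T) ↔
      ∃ z : ℂˣ, P = (z : ℂ) • (1 : Matrix (Fin (r + 1)) (Fin (r + 1)) ℂ) ∧
        Q = ((z⁻¹ : ℂˣ) : ℂ) • (1 : Matrix (Fin r) (Fin r) ℂ) := by
  constructor
  · rintro ⟨h1, h2⟩
    set R : Matrix (Fin r) (Fin r) ℂ := ((hQ.unit⁻¹ : _) : Matrix (Fin r) (Fin r) ℂ) with hRdef
    have hQR : Q * R = 1 := by
      have h := hQ.unit.mul_inv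
      rwa [hQ.unit_spec] at h
    have e1 : P * S = S * R := by
      calc P * S = P * S * (Q * R) := by rw [hQR, Matrix.mul_one]
        _ = (P * S * Q) * R := by rw [← Matrix.mul_assoc]
        _ = S * R := by rw [h1]
    have e2 : P * T = T * R := by
      calc P * T = P * T * (Q * R) := by rw [hQR, Matrix.mul_one]
        _ = (P * T * Q) * R := by rw [← Matrix.mul_assoc]
        _ = T * R := by rw [h2]
    -- entrywise computations
    have hPS : ∀ (i : Fin (r+1)) (j : Fin r), (P * S) i j = P i j.castSucc := by
      intro i j
      rw [Matrix.mul_apply, hS]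
      rw [Finset.sum_eq_single j.castSucc]
      · simp
      · intro k _ hk
        simp only [Matrix.of_apply]
        rw [if_neg, mul_zero]
        intro hc
        exact hk (Fin.ext (by simpa using hc))
      · simp
    have hPT : ∀ (i : Fin (r+1)) (j : Fin r), (P * T) i j = P i j.succ := by
      intro i j
      rw [Matrix.mul_apply, hT]
      rw [Finset.sum_eq_single j.succ]
      · simp
      · intro k _ hk
        simp only [Matrix.of_apply]
        rw [if_neg, mul_zero]
        intro hc
        exact hk (Fin.ext (by simpa using hc))
      · simp
    have hSM : ∀ (M : Matrix (Fin r) (Fin r) ℂ) (i j : Fin r),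
        (S * M) i.castSucc j = M i j := by
      intro M i j
      rw [Matrix.mul_apply, hS]
      rw [Finset.sum_eq_single i]
      · simp
      · intro k _ hk
        simp only [Matrix.of_apply]
        rw [if_neg, zero_mul]
        intro hc
        exact hk (Fin.ext (by simpa using hc.symm))
      · simp
    have hSRlast : ∀ (j : Fin r), (S * R) (Fin.last r) j = 0 := by
      intro j
      rw [Matrix.mul_apply, hS]
      apply Finset.sum_eq_zero
      intro k _
      simp only [Matrix.of_apply, Fin.val_last]
      rw [if_neg (by omega), zero_mul]
    have hTR : ∀ (i j : Fin r), (T * R) i.succ j = R i j := by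
      intro i j
      rw [Matrix.mul_apply, hT]
      rw [Finset.sum_eq_single i]
      · simp
      · intro k _ hk
        simp only [Matrix.of_apply]
        rw [if_neg, zero_mul]
        intro hc
        exact hk (Fin.ext (by simpa using hc.symm))
      · simp
    have hTR0 : ∀ (j : Fin r), (T * R) 0 j = 0 := by
      intro j
      rw [Matrix.mul_apply, hT]
      apply Finset.sum_eq_zero
      intro k _
      simp only [Matrix.of_apply, Fin.val_zero]
      split_ifs <;> simp_all
    -- derived relations on P
    have rel1 : ∀ j : Fin r, P (Fin.last r) j.castSucc = 0 := by
      intro j; rw [← hPS, e1, hSRlast]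
    have rel2 : ∀ j : Fin r, P 0 j.succ = 0 := by
      intro j; rw [← hPT, e2, hTR0]
    have rel3 : ∀ i j : Fin r, P i.castSucc j.castSucc = P i.succ j.succ := by
      intro i j
      rw [← hPS, ← hPT, e1, e2, hSM, hTR]
    -- shift lemma
    have shift : ∀ (k a b : ℕ) (ha : a + k ≤ r) (hb : b + k ≤ r),
        P ⟨a, by omega⟩ ⟨b, by omega⟩ = P ⟨a + k, by omega⟩ ⟨b + k, by omega⟩ := by
      intro k
      induction k with
      | zero => intro a b ha hb; simp
      | succ n ih =>
        intro a b ha hb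
        have hh : P ⟨a, by omega⟩ ⟨b, by omega⟩ = P ⟨a + n, by omega⟩ ⟨b + n, by omega⟩ :=
          ih a b (by omega) (by omega)
        rw [hh]
        have h3 := rel3 ⟨a + n, by omega⟩ ⟨b + n, by omega⟩
        simp only [Fin.castSucc_mk, Fin.succ_mk] at h3
        rw [h3]
        congr 1 <;> exact Fin.ext (by omega)
    set c : ℂ := P 0 0 with hc
    have hPc : P = c • (1 : Matrix (Fin (r + 1)) (Fin (r + 1)) ℂ) := by
      ext i j
      rw [Matrix.smul_apply, Matrix.one_apply, smul_eq_mul]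
      rcases lt_trichotomy (i : ℕ) (j : ℕ) with h | h | h
      · rw [if_neg (by intro he; subst he; omega), mul_zero]
        have e : P ⟨0, by omega⟩ ⟨(j : ℕ) - (i : ℕ), by omega⟩ =
            P ⟨0 + (i : ℕ), by omega⟩ ⟨((j : ℕ) - (i : ℕ)) + (i : ℕ), by omega⟩ :=
          shift (i : ℕ) 0 ((j : ℕ) - (i : ℕ)) (by omega) (by omega)
        have e2' : P i j = P ⟨0, by omega⟩ ⟨(j : ℕ) - (i : ℕ), by omega⟩ := by
          rw [e]; congr 1 <;> apply Fin.ext <;> simp <;> omega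
        rw [e2']
        have h4 := rel2 ⟨(j : ℕ) - (i : ℕ) - 1, by omega⟩
        have heq : (⟨(j : ℕ) - (i : ℕ) - 1, by omega⟩ : Fin r).succ =
            (⟨(j : ℕ) - (i : ℕ), by omega⟩ : Fin (r + 1)) := by
          apply Fin.ext; simp; omega
        rw [heq] at h4
        convert h4 using 2 <;> exact Fin.ext (by simp)
      · have hij : i = j := Fin.ext h
        subst hij
        rw [if_pos rfl, mul_one]
        have e : P ⟨0, by omega⟩ ⟨0, by omega⟩ =
            P ⟨0 + (i : ℕ), by omega⟩ ⟨0 + (i : ℕ), by omega⟩ :=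
          shift (i : ℕ) 0 0 (by omega) (by omega)
        have e2' : P i i = P ⟨0, by omega⟩ ⟨0, by omega⟩ := by
          rw [e]; congr 1 <;> apply Fin.ext <;> simp
        rw [e2', hc]
        congr 1 <;> exact Fin.ext (by simp)
      · rw [if_neg (by intro he; subst he; omega), mul_zero]
        have hi : (i : ℕ) ≤ r := by omega
        have e : P ⟨(i : ℕ), by omega⟩ ⟨(j : ℕ), by omega⟩ =
            P ⟨(i : ℕ) + (r - (i : ℕ)), by omega⟩ ⟨(j : ℕ) + (r - (i : ℕ)), by omega⟩ :=
          shift (r - (i : ℕ)) (i : ℕ) (j : ℕ) (by omega) (by omega)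
        have e' : P ⟨(i : ℕ), by omega⟩ ⟨(j : ℕ), by omega⟩ =
            P ⟨r, by omega⟩ ⟨(j : ℕ) + (r - (i : ℕ)), by omega⟩ := by
          rw [e]
          all_goals (congr 2 <;> omega)
        have e2' : P i j = P ⟨r, by omega⟩ ⟨(j : ℕ) + (r - (i : ℕ)), by omega⟩ := by
          rw [← e']
        rw [e2']
        have h4 := rel1 ⟨(j : ℕ) + (r - (i : ℕ)), by omega⟩
        have heq : (⟨(j : ℕ) + (r - (i : ℕ)), by omega⟩ : Fin r).castSucc =
            (⟨(j : ℕ) + (r - (i : ℕ)), by omega⟩ : Fin (r + 1)) := by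
          apply Fin.ext; simp
        rw [heq] at h4
        convert h4 using 2 <;> exact Fin.ext (by simp)
    have hcne : c ≠ 0 := by
      intro h0
      rw [hPc, h0, zero_smul] at hP
      exact not_isUnit_zero hP
    refine ⟨Units.mk0 c hcne, hPc, ?_⟩
    have hSQ : S * Q = c⁻¹ • S := by
      rw [hPc, Matrix.smul_mul, Matrix.smul_mul, Matrix.one_mul] at h1
      rw [eq_inv_smul_iff₀ hcne]
      exact h1
    ext i j
    have h3 : (S * Q) i.castSucc j = (c⁻¹ • S) i.castSucc j := by rw [hSQ]
    rw [hSM] at h3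
    rw [h3, Matrix.smul_apply, Matrix.smul_apply, Matrix.one_apply, hS]
    simp only [Matrix.of_apply, Fin.coe_castSucc, smul_eq_mul]
    have hval : (((Units.mk0 c hcne)⁻¹ : ℂˣ) : ℂ) = c⁻¹ := by
      simp [Units.val_inv_eq_inv_val]
    rw [hval]
    congr 1
    simp [Fin.ext_iff]
  · rintro ⟨z, hP', hQ'⟩
    subst hP' hQ' hS hT
    constructor <;>
    · rw [Matrix.smul_mul, Matrix.one_mul, Matrix.mul_smul, Matrix.mul_one, smul_smul]
      norm_cast
      rw [inv_mul_cancel]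
      simp
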